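/- Let B be a closed densely defined symmetric operator with bounded inverse admitting a selfadjoint extension B̃ with compact inverse, and let F be a bounded positive definite selfadjoint operator. Then (B*FB)⁻¹ (defined on ran B*FB) is compact. -/

import Mathlib

open scoped ComplexInnerProductSpace

/-- Let `B` be a closed densely defined symmetric operator with bounded
inverse, admitting a selfadjoint extension `B̃` with compact inverse, and let `F` be a bounded
positive definite selfadjoint operator.  Then `(B*FB)⁻¹` (defined on `ran B*FB`) is compact:
there is a compact operator `K` with `K ((B*FB) x) = x` for all `x ∈ dom B*FB`. -/
theorem inverse_BstarFB_compact
    {E : Type*} [NormedAddCommGroup E] [InnerProductSpace ℂ E] [CompleteSpace E]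
    (B : E →ₗ.[ℂ] E)
    (hdense : Dense (B.domain : Set E))
    (hclosed : B.IsClosed)
    (hBsymm : ∀ u v : B.domain, ⟪B u, (v : E)⟫ = ⟪(u : E), B v⟫)
    -- `B` has bounded inverse
    (hBinv : ∃ c : ℝ, 0 < c ∧ ∀ u : B.domain, c * ‖(u : E)‖ ≤ ‖B u‖)
    -- `B̃` is a selfadjoint extension of `B` with compact (everywhere defined) inverse
    (Bt : E →ₗ.[ℂ] E) (hext : B ≤ Bt) (hBt : IsSelfAdjoint Bt)
    (hBtinv : ∃ Kt : E →L[ℂ] E, IsCompactOperator (Kt : E → E) ∧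
      (∀ u : Bt.domain, Kt (Bt u) = (u : E)) ∧
      (∀ y : E, ∃ hy : Kt y ∈ Bt.domain, Bt ⟨Kt y, hy⟩ = y))
    (F : E →L[ℂ] E) (hF : IsSelfAdjoint F)
    (hFpos : ∃ c : ℝ, 0 < c ∧ ∀ x : E, c * ‖x‖ ^ 2 ≤ (⟪F x, x⟫).re) :
    ∃ K : E →L[ℂ] E, IsCompactOperator (K : E → E) ∧
      ∀ (x : E) (hx : x ∈ B.domain) (hFx : F (B ⟨x, hx⟩) ∈ B.adjoint.domain),
        K (B.adjoint ⟨F (B ⟨x, hx⟩), hFx⟩) = x := by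
  obtain ⟨cB, hcB, hB⟩ := hBinv
  obtain ⟨Kt, hKtc, hKt1, _hKt2⟩ := hBtinv
  obtain ⟨cF, hcF, hFc⟩ := hFpos
  -- the operator C = B* F B on its natural domain
  let G : B.domain →ₗ[ℂ] E := F.toLinearMap ∘ₗ B.toFun
  let D : Submodule ℂ B.domain := (B.adjoint.domain).comap G
  let C : D →ₗ[ℂ] E :=
    B.adjoint.toFun ∘ₗ (LinearMap.codRestrict B.adjoint.domain (G ∘ₗ D.subtype) (fun u => u.2))
  have hinner : ∀ (u : D),
      ⟪C u, ((u : B.domain) : E)⟫ = ⟪F (B (u : B.domain)), B (u : B.domain)⟫ :=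
    fun u => (LinearPMap.adjoint_isFormalAdjoint hdense) ⟨F (B u.1), u.2⟩ u.1
  -- the key estimates
  have hBbound : ∀ u : D, cF * cB * ‖B (u : B.domain)‖ ≤ ‖C u‖ := by
    intro u
    have h1 : cF * ‖B (u : B.domain)‖ ^ 2 ≤ (⟪C u, ((u : B.domain) : E)⟫).re := by
      rw [hinner u]; exact hFc _
    have h2 : (⟪C u, ((u : B.domain) : E)⟫).re ≤ ‖C u‖ * ‖((u : B.domain) : E)‖ := by
      simpa using re_inner_le_norm (𝕜 := ℂ) (C u) ((u : B.domain) : E)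
    have h3 : cB * ‖((u : B.domain) : E)‖ ≤ ‖B (u : B.domain)‖ := hB _
    have hn : (0:ℝ) ≤ ‖B (u : B.domain)‖ := norm_nonneg _
    rcases eq_or_lt_of_le hn with h0 | h0
    · rw [← h0, mul_zero]; exact norm_nonneg _
    · nlinarith [norm_nonneg (C u), norm_nonneg (((u : B.domain)) : E)]
  have hxbound : ∀ u : D, cF * cB * cB * ‖((u : B.domain) : E)‖ ≤ ‖C u‖ := by
    intro u
    have h1 := hBbound u
    have h3 := hB (u : B.domain)
    nlinarith [mul_pos hcF hcB]
  -- injectivity of C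
  have hinj : Function.Injective C := by
    intro u v huv
    have h := hxbound (u - v)
    rw [map_sub, huv, sub_self, norm_zero] at h
    have hpos : 0 < cF * cB * cB := by positivity
    have hz : ‖(((u - v : D) : B.domain) : E)‖ = 0 := by nlinarith [norm_nonneg ((((u - v : D)) : B.domain) : E)]
    have : (((u - v : D) : B.domain) : E) = 0 := norm_eq_zero.mp hz
    have h2 : ((u - v : D) : B.domain) = 0 := Subtype.ext this
    have h3 : (u - v : D) = 0 := Subtype.ext h2
    exact sub_eq_zero.mp h3
  -- the map y = C u ↦ B u, bounded on the range of C
  let Bmap : D →ₗ[ℂ] E := B.toFun ∘ₗ D.subtype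
  let eC : D ≃ₗ[ℂ] LinearMap.range C := LinearEquiv.ofInjective C hinj
  let S₀ : LinearMap.range C →ₗ[ℂ] E := Bmap ∘ₗ (eC.symm : LinearMap.range C →ₗ[ℂ] D)
  have hS₀ : ∀ y : LinearMap.range C, ‖S₀ y‖ ≤ (cF * cB)⁻¹ * ‖y‖ := by
    intro y
    set u := eC.symm y with hu
    have hyu : (y : E) = C u := by
      have : eC u = y := by rw [hu, LinearEquiv.apply_symm_apply]
      rw [← this]; rfl
    have h1 := hBbound u
    have hS : S₀ y = B (u : B.domain) := rfl
    rw [hS]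
    have hpos : 0 < cF * cB := mul_pos hcF hcB
    have hny : ‖y‖ = ‖C u‖ := by
      show ‖(y : E)‖ = ‖C u‖; rw [hyu]
    rw [inv_mul_eq_div, le_div_iff₀ hpos, hny, mul_comm]
    exact h1
  let S₀c : LinearMap.range C →L[ℂ] E := S₀.mkContinuous ((cF * cB)⁻¹) hS₀
  -- extend to the closure of the range
  let Mc : Submodule ℂ E := (LinearMap.range C).topologicalClosure
  haveI : CompleteSpace Mc := (LinearMap.range C).isClosed_topologicalClosure.completeSpace_coe
  let e : (LinearMap.range C : Submodule ℂ E) →L[ℂ] Mc :=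
    ContinuousLinearMap.codRestrict (LinearMap.range C).subtypeL Mc
      (fun x => (LinearMap.range C).le_topologicalClosure x.2)
  have h_e : IsUniformInducing e := by
    have : Isometry e := AddMonoidHomClass.isometry_of_norm e (fun x => rfl)
    exact this.isUniformInducing
  have h_dense : DenseRange e := by
    intro y
    rw [closure_subtype]
    have himg : Subtype.val '' Set.range e = (LinearMap.range C : Set E) := by
      rw [← Set.range_comp]
      exact Subtype.range_coe
    rw [himg]
    have h3 : (Mc : Set E) = closure ((LinearMap.range C : Submodule ℂ E) : Set E) :=
      Submodule.topologicalClosure_coe _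
    rw [← h3]
    exact y.2
  let Sext : Mc →L[ℂ] E := S₀c.extend e
  -- the compact inverse
  refine ⟨(Kt.comp Sext).comp (Mc.orthogonalProjectionOnto), ?_, ?_⟩
  · have : IsCompactOperator (⇑Kt ∘ ⇑(Sext.comp (Mc.orthogonalProjectionOnto))) :=
      hKtc.comp_clm _
    have heq : ⇑((Kt.comp Sext).comp (Mc.orthogonalProjectionOnto))
        = ⇑Kt ∘ ⇑(Sext.comp (Mc.orthogonalProjectionOnto)) := by
      ext z; rfl
    rwa [heq]
  · intro x hx hFx
    set u : D := ⟨⟨x, hx⟩, hFx⟩ with hu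
    have hy : B.adjoint ⟨F (B ⟨x, hx⟩), hFx⟩ = C u := rfl
    rw [hy]
    have hmem : C u ∈ Mc := (LinearMap.range C).le_topologicalClosure (LinearMap.mem_range_self C u)
    have hproj : Mc.orthogonalProjectionOnto (C u) = ⟨C u, hmem⟩ :=
      Submodule.orthogonalProjectionOnto_mem_subspace_eq_self (⟨C u, hmem⟩ : Mc)
    have hz : (⟨C u, hmem⟩ : Mc) = e ⟨C u, LinearMap.mem_range_self C u⟩ := rfl
    have hSext : Sext (⟨C u, hmem⟩ : Mc) = S₀c ⟨C u, LinearMap.mem_range_self C u⟩ := by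
      rw [hz]
      exact ContinuousLinearMap.extend_eq _ h_dense h_e _
    have hS0 : S₀c ⟨C u, LinearMap.mem_range_self C u⟩ = B (u : B.domain) := by
      have h1 : eC.symm ⟨C u, LinearMap.mem_range_self C u⟩ = u := by
        apply eC.injective
        rw [LinearEquiv.apply_symm_apply]
        exact Subtype.ext (by simp [eC, LinearEquiv.ofInjective_apply])
      show S₀ ⟨C u, LinearMap.mem_range_self C u⟩ = B (u : B.domain)
      show Bmap (eC.symm ⟨C u, LinearMap.mem_range_self C u⟩) = B (u : B.domain)
      rw [h1]; rfl
    have hBt' : B (u : B.domain) = Bt ⟨x, hext.1 hx⟩ := hext.2 rfl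
    calc ((Kt.comp Sext).comp (Mc.orthogonalProjectionOnto)) (C u)
        = Kt (Sext (Mc.orthogonalProjectionOnto (C u))) := rfl
      _ = Kt (B (u : B.domain)) := by rw [hproj, hSext, hS0]
      _ = Kt (Bt ⟨x, hext.1 hx⟩) := by rw [hBt']
      _ = x := hKt1 _
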